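/- For every n×n real matrix B there exist real symmetric n×n matrices A and M, with M invertible, such that B = A · M⁻¹; likewise there exist real symmetric n×n matrices A' and M', with M' invertible, such that B = M'⁻¹ · A'. -/

import Mathlib

open Polynomial DirectSum Matrix

theorem good_quot_monic (q : ℝ[X]) (hq : q.Monic) :
    ∃ φ : (ℝ[X] ⧸ (ℝ[X] ∙ q)) →ₗ[ℝ] (ℝ[X] ⧸ (ℝ[X] ∙ q)) →ₗ[ℝ] ℝ,
      (∀ a b, φ a b = φ b a) ∧ (∀ a, (∀ b, φ a b = 0) → a = 0) ∧
      (∀ a b, φ ((X : ℝ[X]) • a) b = φ a ((X : ℝ[X]) • b)) := by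
  rcases Nat.eq_zero_or_pos q.natDegree with h0 | hpos
  · -- q = 1, quotient trivial
    have hq1 : q = 1 := hq.natDegree_eq_zero.mp h0
    have : Subsingleton (ℝ[X] ⧸ (ℝ[X] ∙ q)) := by
      rw [Submodule.Quotient.subsingleton_iff, hq1]
      exact eq_top_iff.mpr fun x _ => Submodule.mem_span_singleton.mpr ⟨x, by simp⟩
    exact ⟨0, by simp, fun a _ => Subsingleton.elim a 0, by simp⟩
  · set d := q.natDegree with hd
    set S := (ℝ[X] ∙ q) with hS
    set S' := S.restrictScalars ℝ with hS'
    set lam : ℝ[X] →ₗ[ℝ] ℝ := (lcoeff ℝ (d-1)).comp (modByMonicHom q) with hlam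
    set Phi : ℝ[X] →ₗ[ℝ] ℝ[X] →ₗ[ℝ] ℝ :=
      (LinearMap.mul ℝ ℝ[X]).compr₂ lam with hPhi
    have hPhi_apply : ∀ f g : ℝ[X], Phi f g = ((f * g) %ₘ q).coeff (d-1) := fun f g => rfl
    have hdvd : ∀ s ∈ S', ∀ g : ℝ[X], q ∣ s * g := by
      intro s hs g
      rcases Submodule.mem_span_singleton.mp hs with ⟨c, rfl⟩
      exact Dvd.dvd.mul_right (Dvd.dvd.mul_left (dvd_refl q) c) g
    have hker1 : S' ≤ LinearMap.ker Phi := by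
      intro s hs
      rw [LinearMap.mem_ker]
      refine LinearMap.ext fun g => ?_
      rw [hPhi_apply, (modByMonic_eq_zero_iff_dvd hq).mpr (hdvd s hs g)]
      simp
    set Psi : (ℝ[X] ⧸ S') →ₗ[ℝ] ℝ[X] →ₗ[ℝ] ℝ := S'.liftQ Phi hker1 with hPsi
    have hker2 : S' ≤ LinearMap.ker Psi.flip := by
      intro s hs
      rw [LinearMap.mem_ker]
      refine LinearMap.ext fun a => ?_
      obtain ⟨g, rfl⟩ := Submodule.Quotient.mk_surjective S' a
      show Psi (Submodule.Quotient.mk g) s = 0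
      rw [hPsi, Submodule.liftQ_apply, hPhi_apply,
        (modByMonic_eq_zero_iff_dvd hq).mpr (by rw [mul_comm]; exact hdvd s hs g)]
      simp
    set φ₀ : (ℝ[X] ⧸ S') →ₗ[ℝ] (ℝ[X] ⧸ S') →ₗ[ℝ] ℝ := S'.liftQ Psi.flip hker2 with hφ₀
    set re : (ℝ[X] ⧸ S') ≃ₗ[ℝ] (ℝ[X] ⧸ S) := Submodule.Quotient.restrictScalarsEquiv ℝ S
      with hre
    set φ : (ℝ[X] ⧸ S) →ₗ[ℝ] (ℝ[X] ⧸ S) →ₗ[ℝ] ℝ :=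
      φ₀.compl₁₂ re.symm.toLinearMap re.symm.toLinearMap with hφ
    have hremk : ∀ f : ℝ[X],
        re.symm (Submodule.Quotient.mk f) = (Submodule.Quotient.mk f : ℝ[X] ⧸ S') :=
      fun f => Submodule.Quotient.restrictScalarsEquiv_symm_mk ℝ S f
    have hφmk : ∀ f g : ℝ[X],
        φ (Submodule.Quotient.mk f) (Submodule.Quotient.mk g) = ((f * g) %ₘ q).coeff (d-1) := by
      intro f g
      rw [hφ, LinearMap.compl₁₂_apply]
      simp only [LinearEquiv.coe_coe]
      rw [hremk, hremk, hφ₀, Submodule.liftQ_apply, LinearMap.flip_apply, hPsi,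
        Submodule.liftQ_apply, hPhi_apply, mul_comm]
    refine ⟨φ, ?_, ?_, ?_⟩
    · intro a b
      obtain ⟨f, rfl⟩ := Submodule.Quotient.mk_surjective S a
      obtain ⟨g, rfl⟩ := Submodule.Quotient.mk_surjective S b
      rw [hφmk, hφmk, mul_comm]
    · intro a h
      obtain ⟨f, rfl⟩ := Submodule.Quotient.mk_surjective S a
      rw [Submodule.Quotient.mk_eq_zero]
      refine Submodule.mem_span_singleton.mpr ?_
      by_contra hnd
      have hnd' : ¬ q ∣ f := by
        intro ⟨c, hc⟩; exact hnd ⟨c, by rw [smul_eq_mul, mul_comm, ← hc]⟩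
      set r := f %ₘ q with hr
      have hr0 : r ≠ 0 := fun h' => hnd' ((modByMonic_eq_zero_iff_dvd hq).mp h')
      have hkd : r.natDegree < d := natDegree_lt_natDegree hr0 (degree_modByMonic_lt f hq)
      set k := r.natDegree with hk
      set m := d - 1 - k with hm
      have key := h (Submodule.Quotient.mk (X ^ m))
      rw [hφmk] at key
      -- (f * X^m) %ₘ q = (r * X^m) %ₘ q
      have hsub : (f * X ^ m) %ₘ q = (r * X ^ m) %ₘ q := by
        have h1 : f * X ^ m - r * X ^ m = q * ((f /ₘ q) * X ^ m) := by
          have hfr : f - r = q * (f /ₘ q) := by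
            have := modByMonic_add_div f q
            rw [← hr] at this
            linear_combination -this
          rw [← sub_mul, hfr]; ring
        have h2 : (f * X ^ m - r * X ^ m) %ₘ q = 0 :=
          (modByMonic_eq_zero_iff_dvd hq).mpr ⟨(f /ₘ q) * X ^ m, h1⟩
        have h3 := (modByMonicHom q).map_sub (f * X ^ m) (r * X ^ m)
        simp only [modByMonicHom_apply] at h3
        rw [h2] at h3
        exact (sub_eq_zero.mp h3.symm)
      have hdeg : (r * X ^ m).natDegree = d - 1 := by
        rw [natDegree_mul hr0 (pow_ne_zero m X_ne_zero), natDegree_X_pow, ← hk, hm]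
        omega
      have hself : (r * X ^ m) %ₘ q = r * X ^ m := by
        rw [modByMonic_eq_self_iff hq]
        exact degree_lt_degree (by rw [hdeg]; omega)
      rw [hsub, hself, coeff_mul_X_pow'] at key
      have hle : m ≤ d - 1 := by omega
      rw [if_pos hle] at key
      have : d - 1 - m = k := by omega
      rw [this] at key
      exact leadingCoeff_ne_zero.mpr hr0 key
    · intro a b
      obtain ⟨f, rfl⟩ := Submodule.Quotient.mk_surjective S a
      obtain ⟨g, rfl⟩ := Submodule.Quotient.mk_surjective S b
      rw [show (X : ℝ[X]) • (Submodule.Quotient.mk f : ℝ[X] ⧸ S) =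
          Submodule.Quotient.mk (X * f) from (Submodule.Quotient.mk_smul S _ _).symm,
        show (X : ℝ[X]) • (Submodule.Quotient.mk g : ℝ[X] ⧸ S) =
          Submodule.Quotient.mk (X * g) from (Submodule.Quotient.mk_smul S _ _).symm,
        hφmk, hφmk]
      ring_nf

theorem good_directSum {ι : Type} [Fintype ι] [DecidableEq ι] (W : ι → Type)
    [∀ i, AddCommGroup (W i)] [∀ i, Module ℝ (W i)] [∀ i, Module ℝ[X] (W i)]
    [∀ i, IsScalarTower ℝ ℝ[X] (W i)]
    (φ : ∀ i, W i →ₗ[ℝ] W i →ₗ[ℝ] ℝ)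
    (hsym : ∀ i a b, φ i a b = φ i b a)
    (hnd : ∀ i a, (∀ b, φ i a b = 0) → a = 0)
    (hbal : ∀ i a b, φ i ((X : ℝ[X]) • a) b = φ i a ((X : ℝ[X]) • b)) :
    ∃ Φ : (⨁ i, W i) →ₗ[ℝ] (⨁ i, W i) →ₗ[ℝ] ℝ,
      (∀ v w, Φ v w = Φ w v) ∧ (∀ v, (∀ w, Φ v w = 0) → v = 0) ∧
      (∀ v w, Φ ((X : ℝ[X]) • v) w = Φ v ((X : ℝ[X]) • w)) := by
  set Φ : (⨁ i, W i) →ₗ[ℝ] (⨁ i, W i) →ₗ[ℝ] ℝ :=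
    ∑ i : ι, (φ i).compl₁₂ (component ℝ ι W i) (component ℝ ι W i) with hΦ
  have hΦ_apply : ∀ v w : ⨁ i, W i, Φ v w = ∑ i : ι, φ i (v i) (w i) := by
    intro v w
    rw [hΦ, LinearMap.sum_apply, LinearMap.sum_apply]
    rfl
  refine ⟨Φ, ?_, ?_, ?_⟩
  · intro v w; rw [hΦ_apply, hΦ_apply]; exact Finset.sum_congr rfl fun i _ => hsym i _ _
  · intro v h
    refine DFinsupp.ext fun j => ?_
    refine hnd j (v j) fun b => ?_
    have := h (DirectSum.of W j b)
    rw [hΦ_apply] at this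
    rwa [Finset.sum_eq_single j
      (fun i _ hij => by rw [DirectSum.of_eq_of_ne _ _ _ hij]; simp)
      (fun hj => absurd (Finset.mem_univ j) hj), DirectSum.of_eq_same] at this
  · intro v w
    rw [hΦ_apply, hΦ_apply]
    refine Finset.sum_congr rfl fun i _ => ?_
    rw [DirectSum.smul_apply, DirectSum.smul_apply]
    exact hbal i _ _

theorem good_quot (q : ℝ[X]) (hq : q ≠ 0) :
    ∃ φ : (ℝ[X] ⧸ (ℝ[X] ∙ q)) →ₗ[ℝ] (ℝ[X] ⧸ (ℝ[X] ∙ q)) →ₗ[ℝ] ℝ,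
      (∀ a b, φ a b = φ b a) ∧ (∀ a, (∀ b, φ a b = 0) → a = 0) ∧
      (∀ a b, φ ((X : ℝ[X]) • a) b = φ a ((X : ℝ[X]) • b)) := by
  have hc : q.leadingCoeff ≠ 0 := leadingCoeff_ne_zero.mpr hq
  have hmon : (q * C q.leadingCoeff⁻¹).Monic := monic_mul_leadingCoeff_inv hq
  have hspan : (ℝ[X] ∙ q) = (ℝ[X] ∙ (q * C q.leadingCoeff⁻¹)) := by
    apply le_antisymm
    · rw [Submodule.span_le, Set.singleton_subset_iff]
      refine Submodule.mem_span_singleton.mpr ⟨C q.leadingCoeff, ?_⟩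
      rw [smul_eq_mul, mul_comm q (C q.leadingCoeff⁻¹), ← mul_assoc, ← C_mul,
        mul_inv_cancel₀ hc, C_1, one_mul]
    · rw [Submodule.span_le, Set.singleton_subset_iff]
      exact Submodule.mem_span_singleton.mpr ⟨C q.leadingCoeff⁻¹, by rw [smul_eq_mul, mul_comm]⟩
  rw [hspan]
  exact good_quot_monic _ hmon

theorem good_form_exists (V : Type) [AddCommGroup V] [Module ℝ V] [FiniteDimensional ℝ V]
    (f : V →ₗ[ℝ] V) :
    ∃ φ : V →ₗ[ℝ] V →ₗ[ℝ] ℝ,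
      (∀ v w, φ v w = φ w v) ∧ (∀ v, (∀ w, φ v w = 0) → v = 0) ∧
      (∀ v w, φ (f v) w = φ v (f w)) := by
  classical
  have htors : Module.IsTorsion ℝ[X] (Module.AEval' f) :=
    Module.AEval.isTorsion_of_finiteDimensional ℝ V f
  obtain ⟨ι, hfin, p, hp, e, ⟨E⟩⟩ := Module.equiv_directSum_of_isTorsion htors
  choose φq hsym hnd hbal using fun i : ι =>
    good_quot (p i ^ e i) (pow_ne_zero _ (hp i).ne_zero)
  obtain ⟨Φ, hΦsym, hΦnd, hΦbal⟩ := good_directSum _ φq hsym hnd hbal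
  set E0 : Module.AEval' f →ₗ[ℝ] ⨁ i : ι, ℝ[X] ⧸ (ℝ[X] ∙ (p i ^ e i)) :=
    (E.toLinearMap).restrictScalars ℝ with hE0
  set ofV : V ≃ₗ[ℝ] Module.AEval' f := Module.AEval'.of f with hofV
  set G : V →ₗ[ℝ] ⨁ i : ι, ℝ[X] ⧸ (ℝ[X] ∙ (p i ^ e i)) := E0 ∘ₗ ofV.toLinearMap with hG
  have hGapp : ∀ v : V, G v = E (ofV v) := fun v => rfl
  refine ⟨Φ.compl₁₂ G G, ?_, ?_, ?_⟩
  · intro v w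
    exact hΦsym _ _
  · intro v h
    have h0 : E (ofV v) = 0 := by
      refine hΦnd _ fun w' => ?_
      have := h (ofV.symm (E.symm w'))
      rw [LinearMap.compl₁₂_apply, hGapp, hGapp] at this
      rwa [ofV.apply_symm_apply, E.apply_symm_apply] at this
    have : ofV v = 0 := by
      have := E.injective (h0.trans (map_zero E).symm)
      exact this
    simpa using congrArg ofV.symm this
  · intro v w
    rw [LinearMap.compl₁₂_apply, LinearMap.compl₁₂_apply, hGapp, hGapp, hGapp, hGapp]
    have h1 : ofV (f v) = (X : ℝ[X]) • ofV v := (Module.AEval'.X_smul_of f v).symm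
    have h2 : ofV (f w) = (X : ℝ[X]) • ofV w := (Module.AEval'.X_smul_of f w).symm
    have h3 : E ((X : ℝ[X]) • ofV v) = (X : ℝ[X]) • E (ofV v) := map_smul E _ _
    have h4 : E ((X : ℝ[X]) • ofV w) = (X : ℝ[X]) • E (ofV w) := map_smul E _ _
    rw [h1, h2, h3, h4]
    exact hΦbal _ _

theorem exists_symm_intertwine (n : ℕ) (B : Matrix (Fin n) (Fin n) ℝ) :
    ∃ M : Matrix (Fin n) (Fin n) ℝ, M.IsSymm ∧ IsUnit M ∧ Bᵀ * M = M * B := by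
  obtain ⟨φ, hsym, hnd, hbal⟩ := good_form_exists (Fin n → ℝ) B.mulVecLin
  set M : Matrix (Fin n) (Fin n) ℝ :=
    Matrix.of fun i j => φ (Pi.single i 1) (Pi.single j 1) with hM
  have hMapp : ∀ i j, M i j = φ (Pi.single i 1) (Pi.single j 1) := fun i j => rfl
  have hv : ∀ u : Fin n → ℝ, u = ∑ k, u k • (Pi.single k 1 : Fin n → ℝ) := by
    intro u
    funext j
    rw [Finset.sum_apply]
    simp [Pi.single_apply, Finset.sum_ite_eq]
  have expand2 : ∀ (a : Fin n → ℝ) (u : Fin n → ℝ),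
      φ a u = ∑ k, u k * φ a (Pi.single k 1) := by
    intro a u
    conv_lhs => rw [hv u]
    rw [map_sum]
    exact Finset.sum_congr rfl fun k _ => by rw [_root_.map_smul, smul_eq_mul]
  have hMsymm : M.IsSymm := by
    refine Matrix.ext fun i j => ?_
    rw [Matrix.transpose_apply, hMapp, hMapp]
    exact hsym _ _
  have hBM : Bᵀ * M = M * B := by
    refine Matrix.ext fun i j => ?_
    have lhs : (Bᵀ * M) i j = φ (Pi.single j 1) (B *ᵥ Pi.single i 1) := by
      rw [expand2, Matrix.mul_apply]
      refine Finset.sum_congr rfl fun k _ => ?_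
      rw [Matrix.mulVec_single_one, Matrix.col_apply, Matrix.transpose_apply, hMapp, hsym (Pi.single j 1)]
    have rhs : (M * B) i j = φ (Pi.single i 1) (B *ᵥ Pi.single j 1) := by
      rw [expand2, Matrix.mul_apply]
      refine Finset.sum_congr rfl fun k _ => ?_
      rw [Matrix.mulVec_single_one, Matrix.col_apply, hMapp]
      ring
    rw [lhs, rhs]
    have h1 : φ (B.mulVecLin (Pi.single j 1)) (Pi.single i 1)
        = φ (Pi.single j 1) (B.mulVecLin (Pi.single i 1)) := hbal _ _
    rw [Matrix.mulVecLin_apply, Matrix.mulVecLin_apply] at h1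
    rw [← h1, hsym]
  have hunit : IsUnit M := by
    rw [← Matrix.vecMul_injective_iff_isUnit]
    intro x y hxy
    have hxy' : x ᵥ* M = y ᵥ* M := hxy
    have hsub : (x - y) ᵥ* M = 0 := by
      rw [Matrix.sub_vecMul, hxy', sub_self]
    have : x - y = 0 := by
      refine hnd _ fun b => ?_
      rw [expand2]
      refine Finset.sum_eq_zero fun k _ => ?_
      have : φ (x - y) (Pi.single k 1) = ((x - y) ᵥ* M) k := by
        rw [hsym, expand2]
        simp only [Matrix.vecMul, dotProduct]
        exact Finset.sum_congr rfl fun l _ => by rw [← hMapp, hMsymm.apply]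
      rw [this, hsub]
      simp
    exact sub_eq_zero.mp this
  exact ⟨M, hMsymm, hunit, hBM⟩


/-- Any real square matrix `B` can be written as `B = A * M⁻¹` and as `B = M'⁻¹ * A'`
with `A`, `M`, `A'`, `M'` real symmetric matrices and `M`, `M'` invertible. -/
theorem symmetric_factorization_of_square_matrix (n : ℕ) (B : Matrix (Fin n) (Fin n) ℝ) :
    (∃ A M : Matrix (Fin n) (Fin n) ℝ, A.IsSymm ∧ M.IsSymm ∧ IsUnit M ∧ B = A * M⁻¹) ∧
    (∃ A' M' : Matrix (Fin n) (Fin n) ℝ, A'.IsSymm ∧ M'.IsSymm ∧ IsUnit M' ∧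
      B = M'⁻¹ * A') := by
  constructor
  · obtain ⟨N, hNsymm, hNunit, hN⟩ := exists_symm_intertwine n Bᵀ
    rw [Matrix.transpose_transpose] at hN
    refine ⟨B * N, N, ?_, hNsymm, hNunit, ?_⟩
    · show (B * N)ᵀ = B * N
      rw [Matrix.transpose_mul, hNsymm, ← hN]
    · rw [Matrix.mul_assoc, Matrix.mul_nonsing_inv _ (Matrix.isUnit_iff_isUnit_det N |>.mp hNunit),
        Matrix.mul_one]
  · obtain ⟨M, hMsymm, hMunit, hM⟩ := exists_symm_intertwine n B
    refine ⟨M * B, M, ?_, hMsymm, hMunit, ?_⟩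
    · show (M * B)ᵀ = M * B
      rw [Matrix.transpose_mul, hMsymm, hM]
    · rw [← Matrix.mul_assoc, Matrix.nonsing_inv_mul _ (Matrix.isUnit_iff_isUnit_det M |>.mp hMunit),
        Matrix.one_mul]
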